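/- arXiv:1505.04965 — 5 statements merged into one kernel-verified Lean document; each statement's English description precedes it below -/
import Mathlib

section
/- Let k > 0, x_K ∈ ℝ², let d₁, …, d_n be unit vectors in ℝ², and let α₁, …, α_n be nonnegative real numbers with Σ_{ℓ=1}^n α_ℓ = 1 and Σ_{ℓ=1}^n α_ℓ d_ℓ = 0 ∈ ℝ². Define b₁(x) = Σ_{ℓ=1}^n α_ℓ exp(i k d_ℓ·(x − x_K)). Then for every x ∈ ℝ², |b₁(x) − 1| ≤ (1/2) k² |x − x_K|², where |x − x_K| is the Euclidean norm. -/
open Real Complex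

private lemma aux_f_nonneg (t : ℝ) :
    0 ≤ t^4/4 - t^2 - 2 + 2*Real.cos t + 2*t*Real.sin t := by
  set f : ℝ → ℝ := fun t => t^4/4 - t^2 - 2 + 2*Real.cos t + 2*t*Real.sin t with hf
  have hderiv : ∀ t : ℝ, HasDerivAt f (t^3 - 2*t + 2*t*Real.cos t) t := by
    intro t
    have h1 : HasDerivAt (fun t : ℝ => t^4/4 - t^2 - 2) (t^3 - 2*t) t := by
      have := ((hasDerivAt_pow 4 t).div_const 4).sub ((hasDerivAt_pow 2 t))
      refine (this.sub_const 2).congr_deriv ?_; norm_num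
    have h2 : HasDerivAt (fun t : ℝ => 2*Real.cos t) (-2*Real.sin t) t := by
      simpa using (Real.hasDerivAt_cos t).const_mul 2
    have h3 : HasDerivAt (fun t : ℝ => 2*t*Real.sin t)
        (2*Real.sin t + 2*t*Real.cos t) t := by
      have := ((hasDerivAt_id t).const_mul 2).mul (Real.hasDerivAt_sin t)
      refine this.congr_deriv ?_; simp only [id_eq]; ring
    have := (h1.add h2).add h3
    refine this.congr_deriv ?_; ring
  have hmono : MonotoneOn f (Set.Ici (0:ℝ)) := by
    apply monotoneOn_of_deriv_nonneg (convex_Ici 0)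
      (fun t _ => (hderiv t).continuousAt.continuousWithinAt)
      (fun t _ => ((hderiv t).differentiableAt).differentiableWithinAt)
    intro t ht
    rw [(hderiv t).deriv]
    rw [interior_Ici] at ht
    have hc := Real.one_sub_sq_div_two_le_cos (x := t)
    nlinarith [le_of_lt (Set.mem_Ioi.mp ht)]
  have h0 : f 0 = 0 := by simp [hf]
  have key : ∀ s : ℝ, 0 ≤ s → 0 ≤ f s := by
    intro s hs
    have := hmono (Set.self_mem_Ici) (Set.mem_Ici.mpr hs) hs
    rwa [h0] at this
  rcases le_total 0 t with h | h
  · exact key t h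
  · have h5 := key (-t) (by linarith)
    have h4 : f (-t) = f t := by simp only [hf, Real.cos_neg, Real.sin_neg]; ring
    rwa [h4] at h5

private lemma exp_I_taylor (t : ℝ) :
    ‖Complex.exp (Complex.I * t) - 1 - Complex.I * t‖ ≤ t^2 / 2 := by
  set z := Complex.exp (Complex.I * t) - 1 - Complex.I * t with hz
  have hre : z.re = Real.cos t - 1 := by
    simp [hz, mul_comm Complex.I (t:ℂ), Complex.exp_mul_I, Complex.cos_ofReal_re]
  have him : z.im = Real.sin t - t := by
    simp [hz, mul_comm Complex.I (t:ℂ), Complex.exp_mul_I, Complex.sin_ofReal_re]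
  have hsq : ‖z‖^2 = (Real.cos t - 1)^2 + (Real.sin t - t)^2 := by
    rw [Complex.sq_norm, Complex.normSq_apply, hre, him]; ring
  have hb : ‖z‖^2 ≤ (t^2/2)^2 := by
    rw [hsq]
    have h1 := aux_f_nonneg t
    have h2 := Real.sin_sq_add_cos_sq t
    nlinarith
  nlinarith [norm_nonneg z, sq_nonneg (t^2/2), sq_nonneg (‖z‖ - t^2/2),
    sq_nonneg (‖z‖ + t^2/2)]

/-- Second-order Taylor bound: if `Σ αℓ = 1`, `Σ αℓ dℓ = 0` with `αℓ ≥ 0`, then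
`|b₁(x) − 1| ≤ (1/2) k² |x − x_K|²`. -/
theorem planeWaveCombination_sub_one_bound
    (k : ℝ) (hk : 0 < k) (xK : EuclideanSpace ℝ (Fin 2)) (n : ℕ)
    (d : Fin n → EuclideanSpace ℝ (Fin 2)) (hd : ∀ ℓ, ‖d ℓ‖ = 1)
    (α : Fin n → ℝ) (hα : ∀ ℓ, 0 ≤ α ℓ) (hsum : ∑ ℓ, α ℓ = 1)
    (hvec : ∑ ℓ, α ℓ • d ℓ = (0 : EuclideanSpace ℝ (Fin 2)))
    (b1 : EuclideanSpace ℝ (Fin 2) → ℂ)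
    (hb1 : ∀ x, b1 x = ∑ ℓ, (α ℓ : ℂ) *
      Complex.exp (Complex.I * (k : ℂ) * ((inner ℝ (d ℓ) (x - xK) : ℝ) : ℂ))) :
    ∀ x, ‖b1 x - 1‖ ≤ (1 / 2) * k ^ 2 * ‖x - xK‖ ^ 2 := by
  intro x
  set t : Fin n → ℝ := fun ℓ => inner ℝ (d ℓ) (x - xK) with ht
  have htsum : ∑ ℓ, α ℓ * t ℓ = 0 := by
    have h0 : (inner ℝ (∑ ℓ, α ℓ • d ℓ) (x - xK) : ℝ) = 0 := by rw [hvec]; simp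
    rw [sum_inner] at h0
    have h1 : ∀ ℓ : Fin n, (inner ℝ (α ℓ • d ℓ) (x - xK) : ℝ) = α ℓ * t ℓ := fun ℓ =>
      real_inner_smul_left _ _ _
    rwa [Finset.sum_congr rfl (fun ℓ _ => h1 ℓ)] at h0
  have key : b1 x - 1 = ∑ ℓ, (α ℓ : ℂ) *
      (Complex.exp (Complex.I * ((k * t ℓ : ℝ) : ℂ)) - 1 - Complex.I * ((k * t ℓ : ℝ) : ℂ)) := by
    rw [hb1 x]
    have earg : ∀ ℓ : Fin n, Complex.I * (k : ℂ) * ((inner ℝ (d ℓ) (x - xK) : ℝ) : ℂ)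
        = Complex.I * ((k * t ℓ : ℝ) : ℂ) := by
      intro ℓ; push_cast; ring
    have e1 : (1 : ℂ) = ∑ ℓ, (α ℓ : ℂ) := by
      rw [← Complex.ofReal_sum, hsum]; simp
    have e2 : ∑ ℓ, (α ℓ : ℂ) * (Complex.I * ((k * t ℓ : ℝ) : ℂ)) = 0 := by
      have h3 : ∑ ℓ, α ℓ * (k * t ℓ) = k * ∑ ℓ, α ℓ * t ℓ := by
        rw [Finset.mul_sum]; exact Finset.sum_congr rfl fun ℓ _ => by ring
      have h4 : ∑ ℓ, (α ℓ : ℂ) * ((k * t ℓ : ℝ) : ℂ) = 0 := by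
        have : ((∑ ℓ, α ℓ * (k * t ℓ) : ℝ) : ℂ) = 0 := by rw [h3, htsum]; simp
        simpa [Complex.ofReal_sum] using this
      calc ∑ ℓ, (α ℓ : ℂ) * (Complex.I * ((k * t ℓ : ℝ) : ℂ))
          = Complex.I * ∑ ℓ, (α ℓ : ℂ) * ((k * t ℓ : ℝ) : ℂ) := by
            rw [Finset.mul_sum]; exact Finset.sum_congr rfl fun ℓ _ => by ring
        _ = 0 := by rw [h4]; ring
    have expand : ∀ ℓ : Fin n, (α ℓ : ℂ) *
        (Complex.exp (Complex.I * ((k * t ℓ : ℝ) : ℂ)) - 1 - Complex.I * ((k * t ℓ : ℝ) : ℂ))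
        = (α ℓ : ℂ) * Complex.exp (Complex.I * (k : ℂ) * ((inner ℝ (d ℓ) (x - xK) : ℝ) : ℂ))
          - (α ℓ : ℂ) - (α ℓ : ℂ) * (Complex.I * ((k * t ℓ : ℝ) : ℂ)) := by
      intro ℓ; rw [← earg ℓ]; ring
    rw [Finset.sum_congr rfl (fun ℓ _ => expand ℓ), Finset.sum_sub_distrib,
      Finset.sum_sub_distrib, e2, ← e1, sub_zero]
  rw [key]
  calc ‖∑ ℓ, (α ℓ : ℂ) *
        (Complex.exp (Complex.I * ((k * t ℓ : ℝ) : ℂ)) - 1 - Complex.I * ((k * t ℓ : ℝ) : ℂ))‖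
      ≤ ∑ ℓ, ‖(α ℓ : ℂ) *
        (Complex.exp (Complex.I * ((k * t ℓ : ℝ) : ℂ)) - 1 - Complex.I * ((k * t ℓ : ℝ) : ℂ))‖ :=
        norm_sum_le _ _
    _ ≤ ∑ ℓ, α ℓ * ((1/2) * k^2 * ‖x - xK‖^2) := by
        apply Finset.sum_le_sum
        intro ℓ _
        rw [norm_mul, Complex.norm_real, Real.norm_of_nonneg (hα ℓ)]
        apply mul_le_mul_of_nonneg_left _ (hα ℓ)
        have h1 := exp_I_taylor (k * t ℓ)
        have h2 : |t ℓ| ≤ ‖x - xK‖ := by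
          have := abs_real_inner_le_norm (d ℓ) (x - xK)
          rwa [hd ℓ, one_mul] at this
        have h3 : (k * t ℓ)^2 ≤ k^2 * ‖x - xK‖^2 := by
          have h5 : (t ℓ)^2 ≤ ‖x - xK‖^2 := by
            have h6 := _root_.sq_abs (t ℓ)
            nlinarith [abs_nonneg (t ℓ), norm_nonneg (x - xK)]
          nlinarith [sq_nonneg k]
        calc ‖_‖ ≤ (k * t ℓ)^2 / 2 := h1
          _ ≤ (1/2) * k^2 * ‖x - xK‖^2 := by linarith
    _ = (1/2) * k^2 * ‖x - xK‖^2 := by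
        rw [← Finset.sum_mul, hsum, one_mul]
end

section
/- Let k > 0, x_K ∈ ℝ², h_K > 0, let d₁, …, d_n be unit vectors in ℝ², and let α₁, …, α_n be nonnegative real numbers with Σ_{ℓ=1}^n α_ℓ = 1 and Σ_{ℓ=1}^n α_ℓ d_ℓ = 0. Define b₁(x) = Σ_{ℓ=1}^n α_ℓ exp(i k d_ℓ·(x − x_K)). Then for every measurable set K ⊂ ℝ² of finite Lebesgue measure |K| contained in the closed ball of radius h_K centered at x_K, one has ‖1 − b₁‖_{L²(K)} ≤ (1/2) (h_K k)² |K|^{1/2}. -/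
open MeasureTheory

lemma auxg_nonneg : ∀ t : ℝ, 0 ≤ t^4/4 - t^2 + 2*t*Real.sin t + 2*Real.cos t - 2 := by
  set g : ℝ → ℝ := fun t => t^4/4 - t^2 + 2*t*Real.sin t + 2*Real.cos t - 2 with hg
  have hder : ∀ t : ℝ, HasDerivAt g (t*(t^2 - 2 + 2*Real.cos t)) t := by
    intro t
    have h1 : HasDerivAt (fun t : ℝ => t^4/4) ((4:ℕ)*t^3/4) t :=
      (hasDerivAt_pow 4 t).div_const 4
    have h2 : HasDerivAt (fun t : ℝ => t^2) ((2:ℕ)*t^1) t := hasDerivAt_pow 2 t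
    have h3 : HasDerivAt (fun t : ℝ => 2*t*Real.sin t)
        ((2*1) * Real.sin t + (2*t) * Real.cos t) t :=
      ((hasDerivAt_id t).const_mul 2).mul (Real.hasDerivAt_sin t)
    have h4 : HasDerivAt (fun t : ℝ => 2*Real.cos t) (2 * (-Real.sin t)) t :=
      (Real.hasDerivAt_cos t).const_mul 2
    have := (((h1.sub h2).add h3).add h4).sub_const 2
    refine this.congr_deriv ?_
    push_cast; ring
  have key : ∀ t : ℝ, 0 ≤ t → 0 ≤ g t := by
    intro t ht
    have hmono : MonotoneOn g (Set.Ici 0) := by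
      apply monotoneOn_of_deriv_nonneg (convex_Ici 0)
        (fun x _ => (hder x).continuousAt.continuousWithinAt)
        (fun x _ => (hder x).differentiableAt.differentiableWithinAt)
      intro x hx
      rw [(hder x).deriv]
      rw [interior_Ici] at hx
      have hc : 1 - x^2/2 ≤ Real.cos x := Real.one_sub_sq_div_two_le_cos
      have : 0 ≤ x^2 - 2 + 2*Real.cos x := by nlinarith
      exact mul_nonneg (le_of_lt hx) this
    have h0 : g 0 = 0 := by simp [hg]
    have := hmono (Set.self_mem_Ici) (Set.mem_Ici.mpr ht) ht
    linarith
  intro t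
  rcases le_total 0 t with ht | ht
  · exact key t ht
  · have := key (-t) (by linarith)
    have he : g (-t) = g t := by
      simp [hg, Real.sin_neg, Real.cos_neg]; ring
    have h2 : 0 ≤ g t := he ▸ this
    simpa [hg] using h2

lemma exp_I_taylor_bound (t : ℝ) :
    ‖Complex.exp (↑t * Complex.I) - 1 - ↑t * Complex.I‖ ≤ t^2/2 := by
  have hexp : Complex.exp (↑t * Complex.I)
      = ↑(Real.cos t) + ↑(Real.sin t) * Complex.I := by
    rw [Complex.exp_mul_I, Complex.ofReal_cos, Complex.ofReal_sin]
  rw [hexp]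
  rw [Complex.norm_def]
  have hre : (↑(Real.cos t) + ↑(Real.sin t) * Complex.I - 1 - ↑t * Complex.I).re
      = Real.cos t - 1 := by simp [Complex.cos_ofReal_re, Complex.sin_ofReal_re]
  have him : (↑(Real.cos t) + ↑(Real.sin t) * Complex.I - 1 - ↑t * Complex.I).im
      = Real.sin t - t := by simp [Complex.cos_ofReal_re, Complex.sin_ofReal_re]
  rw [Complex.normSq_apply, hre, him]
  have hb : (Real.cos t - 1)^2 + (Real.sin t - t)^2 ≤ (t^2/2)^2 := by
    have := auxg_nonneg t
    have hpy : Real.sin t ^ 2 + Real.cos t ^ 2 = 1 := Real.sin_sq_add_cos_sq t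
    nlinarith
  calc Real.sqrt ((Real.cos t - 1) * (Real.cos t - 1) + (Real.sin t - t) * (Real.sin t - t))
      ≤ Real.sqrt ((t^2/2)^2) := Real.sqrt_le_sqrt (by nlinarith)
    _ = t^2/2 := Real.sqrt_sq (by positivity)

/-- `L²(K)` bound for `1 − b₁` on a set `K` contained in the closed ball of
radius `h_K` around `x_K`: `‖1 − b₁‖_{L²(K)} ≤ (1/2)(h_K k)² |K|^{1/2}`. -/
theorem planeWaveCombination_one_sub_L2_bound
    (k : ℝ) (hk : 0 < k) (xK : EuclideanSpace ℝ (Fin 2)) (hK : ℝ) (hhK : 0 < hK)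
    (n : ℕ) (d : Fin n → EuclideanSpace ℝ (Fin 2)) (hd : ∀ ℓ, ‖d ℓ‖ = 1)
    (α : Fin n → ℝ) (hα : ∀ ℓ, 0 ≤ α ℓ) (hsum : ∑ ℓ, α ℓ = 1)
    (hvec : ∑ ℓ, α ℓ • d ℓ = (0 : EuclideanSpace ℝ (Fin 2)))
    (b1 : EuclideanSpace ℝ (Fin 2) → ℂ)
    (hb1 : ∀ x, b1 x = ∑ ℓ, (α ℓ : ℂ) *
      Complex.exp (Complex.I * (k : ℂ) * ((inner ℝ (d ℓ) (x - xK) : ℝ) : ℂ))) :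
    ∀ K : Set (EuclideanSpace ℝ (Fin 2)), MeasurableSet K → volume K < ⊤ →
      K ⊆ Metric.closedBall xK hK →
      Real.sqrt (∫ x in K, ‖1 - b1 x‖ ^ 2) ≤
        (1 / 2) * (hK * k) ^ 2 * Real.sqrt ((volume K).toReal) := by
  intro K hKmeas hKfin hKsub
  set C : ℝ := (1/2) * (hK * k)^2 with hC
  have hC0 : 0 ≤ C := by positivity
  -- pointwise bound
  have hpt : ∀ x ∈ K, ‖1 - b1 x‖ ≤ C := by
    intro x hx
    have hxball : ‖x - xK‖ ≤ hK := by
      have := hKsub hx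
      rwa [Metric.mem_closedBall, dist_eq_norm] at this
    set r : Fin n → ℝ := fun ℓ => (inner ℝ (d ℓ) (x - xK) : ℝ) with hr
    have hrb : ∀ ℓ, |r ℓ| ≤ hK := by
      intro ℓ
      calc |r ℓ| ≤ ‖d ℓ‖ * ‖x - xK‖ := abs_real_inner_le_norm _ _
        _ = ‖x - xK‖ := by rw [hd ℓ, one_mul]
        _ ≤ hK := hxball
    have h0 : ∑ ℓ, α ℓ * r ℓ = 0 := by
      have : (inner ℝ (∑ ℓ, α ℓ • d ℓ) (x - xK) : ℝ) = ∑ ℓ, α ℓ * r ℓ := by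
        rw [sum_inner]
        exact Finset.sum_congr rfl fun ℓ _ => real_inner_smul_left _ _ _
      rw [hvec, inner_zero_left] at this
      exact this.symm
    have hsumC : (∑ ℓ, (α ℓ : ℂ)) = 1 := by
      rw [← Complex.ofReal_sum, hsum, Complex.ofReal_one]
    have h0C : ∑ ℓ, (α ℓ : ℂ) * (Complex.I * ↑k * ↑(r ℓ)) = 0 := by
      have : ∑ ℓ, (α ℓ : ℂ) * (Complex.I * ↑k * ↑(r ℓ))
          = Complex.I * ↑k * ↑(∑ ℓ, α ℓ * r ℓ) := by
        rw [Complex.ofReal_sum, Finset.mul_sum]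
        exact Finset.sum_congr rfl fun ℓ _ => by push_cast; ring
      rw [this, h0]; simp
    have hrw : 1 - b1 x = ∑ ℓ, (α ℓ : ℂ) *
        (1 - Complex.exp (Complex.I * ↑k * ↑(r ℓ)) + Complex.I * ↑k * ↑(r ℓ)) := by
      have : ∑ ℓ, (α ℓ : ℂ) *
          (1 - Complex.exp (Complex.I * ↑k * ↑(r ℓ)) + Complex.I * ↑k * ↑(r ℓ))
          = (∑ ℓ, (α ℓ : ℂ)) - (∑ ℓ, (α ℓ : ℂ) * Complex.exp (Complex.I * ↑k * ↑(r ℓ)))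
            + ∑ ℓ, (α ℓ : ℂ) * (Complex.I * ↑k * ↑(r ℓ)) := by
        rw [← Finset.sum_sub_distrib, ← Finset.sum_add_distrib]
        exact Finset.sum_congr rfl fun ℓ _ => by ring
      rw [this, hsumC, h0C, add_zero, hb1 x]
    rw [hrw]
    calc ‖∑ ℓ, (α ℓ : ℂ) *
        (1 - Complex.exp (Complex.I * ↑k * ↑(r ℓ)) + Complex.I * ↑k * ↑(r ℓ))‖
        ≤ ∑ ℓ, ‖(α ℓ : ℂ) *
          (1 - Complex.exp (Complex.I * ↑k * ↑(r ℓ)) + Complex.I * ↑k * ↑(r ℓ))‖ :=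
          norm_sum_le _ _
      _ ≤ ∑ ℓ, α ℓ * ((k * hK)^2 / 2) := by
          apply Finset.sum_le_sum
          intro ℓ _
          rw [norm_mul, Complex.norm_real, Real.norm_eq_abs, abs_of_nonneg (hα ℓ)]
          apply mul_le_mul_of_nonneg_left _ (hα ℓ)
          have harg : Complex.I * ↑k * ↑(r ℓ) = ↑(k * r ℓ) * Complex.I := by
            push_cast; ring
          rw [harg]
          have h1 : ‖1 - Complex.exp (↑(k * r ℓ) * Complex.I) + ↑(k * r ℓ) * Complex.I‖
              = ‖Complex.exp (↑(k * r ℓ) * Complex.I) - 1 - ↑(k * r ℓ) * Complex.I‖ := by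
            have hneg : (1 : ℂ) - Complex.exp (↑(k * r ℓ) * Complex.I) + ↑(k * r ℓ) * Complex.I
                = -(Complex.exp (↑(k * r ℓ) * Complex.I) - 1 - ↑(k * r ℓ) * Complex.I) := by ring
            rw [hneg, norm_neg]
          rw [h1]
          calc ‖Complex.exp (↑(k * r ℓ) * Complex.I) - 1 - ↑(k * r ℓ) * Complex.I‖
              ≤ (k * r ℓ)^2 / 2 := exp_I_taylor_bound _
            _ ≤ (k * hK)^2 / 2 := by
                have := hrb ℓ
                have h2 : (k * r ℓ)^2 ≤ (k * hK)^2 := by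
                  have : r ℓ ^ 2 ≤ hK ^ 2 := sq_le_sq' (by linarith [abs_le.mp this]) (by linarith [abs_le.mp this])
                  nlinarith [sq_nonneg k, hk.le]
                linarith
      _ = (∑ ℓ, α ℓ) * ((k * hK)^2 / 2) := by rw [← Finset.sum_mul]
      _ = C := by rw [hsum, hC]; ring
  -- continuity / measurability of b1
  have hcont : Continuous b1 := by
    have : Continuous fun x : EuclideanSpace ℝ (Fin 2) => ∑ ℓ, (α ℓ : ℂ) *
        Complex.exp (Complex.I * (k : ℂ) * ((inner ℝ (d ℓ) (x - xK) : ℝ) : ℂ)) := by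
      apply continuous_finset_sum
      intro ℓ _
      exact continuous_const.mul (Complex.continuous_exp.comp
        (continuous_const.mul (Complex.continuous_ofReal.comp
          (continuous_const.inner (continuous_id.sub continuous_const)))))
    rw [funext hb1]
    exact this
  have hintC : IntegrableOn (fun _ : EuclideanSpace ℝ (Fin 2) => C^2) K volume :=
    integrableOn_const hKfin.ne
  have hint : IntegrableOn (fun x => ‖1 - b1 x‖^2) K volume := by
    apply Integrable.mono' hintC
    · exact ((continuous_const.sub hcont).norm.pow 2).aestronglyMeasurable
    · filter_upwards [ae_restrict_mem hKmeas] with x hx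
      rw [Real.norm_eq_abs, abs_of_nonneg (by positivity)]
      have := hpt x hx
      nlinarith [norm_nonneg (1 - b1 x)]
  have hIle : ∫ x in K, ‖1 - b1 x‖^2 ≤ C^2 * (volume K).toReal := by
    calc ∫ x in K, ‖1 - b1 x‖^2 ≤ ∫ _ in K, C^2 :=
        setIntegral_mono_on hint hintC hKmeas (fun x hx => by
          have := hpt x hx
          nlinarith [norm_nonneg (1 - b1 x)])
      _ = (volume K).toReal * C^2 := by rw [setIntegral_const]; simp [smul_eq_mul, Measure.real]
      _ = C^2 * (volume K).toReal := mul_comm _ _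
  calc Real.sqrt (∫ x in K, ‖1 - b1 x‖^2)
      ≤ Real.sqrt (C^2 * (volume K).toReal) := Real.sqrt_le_sqrt hIle
    _ = C * Real.sqrt ((volume K).toReal) := by
        rw [Real.sqrt_mul (sq_nonneg C), Real.sqrt_sq hC0]
    _ = (1/2) * (hK * k)^2 * Real.sqrt ((volume K).toReal) := by rw [hC]
end

section
/- Let k > 0, x_K ∈ ℝ², let d₁, …, d_n be unit vectors in ℝ², and let α₁, …, α_n be nonnegative real numbers with Σ_{ℓ=1}^n α_ℓ = 1 and Σ_{ℓ=1}^n α_ℓ d_ℓ = 0 ∈ ℝ². Define b₁(x) = Σ_{ℓ=1}^n α_ℓ exp(i k d_ℓ·(x − x_K)). Then for every x ∈ ℝ², the gradient of b₁ satisfies |∇b₁(x)| ≤ k² |x − x_K|, where |∇b₁(x)| denotes the Euclidean norm of the (complex) gradient vector Σ_ℓ α_ℓ i k d_ℓ exp(i k d_ℓ·(x − x_K)). -/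
open Complex Finset

private lemma exp_I_mul_sub_one_norm_le (t : ℝ) :
    ‖Complex.exp (Complex.I * (t : ℂ)) - 1‖ ≤ |t| := by
  have h1 : ‖Complex.exp (Complex.I * (t : ℂ)) - 1‖ ^ 2 = 2 - 2 * Real.cos t := by
    have e : Complex.exp (Complex.I * (t : ℂ)) - 1
        = Complex.ofReal (Real.cos t - 1) + Complex.ofReal (Real.sin t) * Complex.I := by
      rw [show Complex.I * (t : ℂ) = (t : ℂ) * Complex.I by ring, Complex.exp_mul_I]
      push_cast
      ring
    rw [e, Complex.norm_add_mul_I, Real.sq_sqrt (by positivity)]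
    nlinarith [Real.sin_sq_add_cos_sq t]
  have h2 := Real.one_sub_sq_div_two_le_cos (x := t)
  nlinarith [norm_nonneg (Complex.exp (Complex.I * (t : ℂ)) - 1), abs_nonneg t, _root_.sq_abs t]

/-- Pointwise bound on the gradient of the plane-wave combination `b₁`:
`|∇b₁(x)| ≤ k² |x − x_K|`, where
`∇b₁(x) = Σℓ αℓ i k dℓ exp(i k dℓ·(x − x_K))`. -/
theorem planeWaveCombination_grad_pointwise_bound
    (k : ℝ) (hk : 0 < k) (xK : EuclideanSpace ℝ (Fin 2)) (n : ℕ)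
    (d : Fin n → EuclideanSpace ℝ (Fin 2)) (hd : ∀ ℓ, ‖d ℓ‖ = 1)
    (α : Fin n → ℝ) (hα : ∀ ℓ, 0 ≤ α ℓ) (hsum : ∑ ℓ, α ℓ = 1)
    (hvec : ∑ ℓ, α ℓ • d ℓ = (0 : EuclideanSpace ℝ (Fin 2)))
    (g : EuclideanSpace ℝ (Fin 2) → EuclideanSpace ℂ (Fin 2))
    (hg : ∀ x j, g x j = ∑ ℓ, (α ℓ : ℂ) * Complex.I * (k : ℂ) * ((d ℓ j : ℝ) : ℂ) *
      Complex.exp (Complex.I * (k : ℂ) * ((inner ℝ (d ℓ) (x - xK) : ℝ) : ℂ))) :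
    ∀ x, ‖g x‖ ≤ k ^ 2 * ‖x - xK‖ := by
  intro x
  classical
  have hr0 : (0:ℝ) ≤ ‖x - xK‖ := norm_nonneg _
  have hvecj : ∀ j, ∑ ℓ, α ℓ * d ℓ j = 0 := by
    intro j
    have h : (∑ ℓ, α ℓ • d ℓ) j = (0 : EuclideanSpace ℝ (Fin 2)) j := by rw [hvec]
    rw [WithLp.ofLp_sum, Finset.sum_apply j] at h
    simpa using h
  -- the summand vectors
  let w : Fin n → EuclideanSpace ℂ (Fin 2) := fun ℓ => WithLp.toLp 2 (fun j => ((d ℓ j : ℝ) : ℂ))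
  let c : Fin n → ℂ := fun ℓ =>
    (α ℓ : ℂ) * Complex.I * (k : ℂ) *
      (Complex.exp (Complex.I * (k : ℂ) * ((inner ℝ (d ℓ) (x - xK) : ℝ) : ℂ)) - 1)
  have hgx : g x = ∑ ℓ, c ℓ • w ℓ := by
    ext j
    rw [hg x j]
    have hap : (∑ ℓ, c ℓ • w ℓ) j = ∑ ℓ, c ℓ * w ℓ j := by
      rw [WithLp.ofLp_sum, Finset.sum_apply j]; rfl
    rw [hap]
    have h0 : ∑ ℓ, (α ℓ : ℂ) * Complex.I * (k : ℂ) * ((d ℓ j : ℝ) : ℂ) = 0 := by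
      have : ((∑ ℓ, α ℓ * d ℓ j : ℝ) : ℂ) = 0 := by rw [hvecj j]; simp
      push_cast at this
      calc ∑ ℓ, (α ℓ : ℂ) * Complex.I * (k : ℂ) * ((d ℓ j : ℝ) : ℂ)
          = (Complex.I * (k : ℂ)) * ∑ ℓ, ((α ℓ : ℂ) * ((d ℓ j : ℝ) : ℂ)) := by
            rw [Finset.mul_sum]; exact Finset.sum_congr rfl fun ℓ _ => by ring
        _ = 0 := by rw [this]; ring
    have hterm : ∀ ℓ, c ℓ * w ℓ j
        = (α ℓ : ℂ) * Complex.I * (k : ℂ) * ((d ℓ j : ℝ) : ℂ) *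
            Complex.exp (Complex.I * (k : ℂ) * ((inner ℝ (d ℓ) (x - xK) : ℝ) : ℂ))
          - (α ℓ : ℂ) * Complex.I * (k : ℂ) * ((d ℓ j : ℝ) : ℂ) := by
      intro ℓ
      show ((α ℓ : ℂ) * Complex.I * (k : ℂ) * _) * ((d ℓ j : ℝ) : ℂ) = _
      ring
    rw [Finset.sum_congr rfl fun ℓ _ => hterm ℓ, Finset.sum_sub_distrib, h0, sub_zero]
  have hw : ∀ ℓ, ‖w ℓ‖ = 1 := by
    intro ℓ
    have h1 := hd ℓ
    rw [EuclideanSpace.norm_eq] at h1 ⊢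
    simpa [w, Real.norm_eq_abs, _root_.sq_abs] using h1
  have hc : ∀ ℓ, ‖c ℓ‖ ≤ α ℓ * (k * (k * ‖x - xK‖)) := by
    intro ℓ
    have harg : Complex.I * (k : ℂ) * ((inner ℝ (d ℓ) (x - xK) : ℝ) : ℂ)
        = Complex.I * ((k * (inner ℝ (d ℓ) (x - xK) : ℝ) : ℝ) : ℂ) := by
      push_cast; ring
    have hexp : ‖Complex.exp (Complex.I * (k : ℂ) * ((inner ℝ (d ℓ) (x - xK) : ℝ) : ℂ)) - 1‖
        ≤ k * ‖x - xK‖ := by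
      rw [harg]
      refine (exp_I_mul_sub_one_norm_le _).trans ?_
      rw [abs_mul, abs_of_pos hk]
      have := abs_real_inner_le_norm (d ℓ) (x - xK)
      rw [hd ℓ, one_mul] at this
      exact mul_le_mul_of_nonneg_left this hk.le
    have hceq : ‖c ℓ‖ = α ℓ * k *
        ‖Complex.exp (Complex.I * (k : ℂ) * ((inner ℝ (d ℓ) (x - xK) : ℝ) : ℂ)) - 1‖ := by
      simp only [c, norm_mul, Complex.norm_real, Complex.norm_I, mul_one, Real.norm_eq_abs]
      rw [_root_.abs_of_nonneg (hα ℓ), _root_.abs_of_pos hk]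
    rw [hceq]
    have := mul_le_mul_of_nonneg_left hexp (mul_nonneg (hα ℓ) hk.le)
    nlinarith [this]
  calc ‖g x‖ = ‖∑ ℓ, c ℓ • w ℓ‖ := by rw [hgx]
    _ ≤ ∑ ℓ, ‖c ℓ • w ℓ‖ := norm_sum_le _ _
    _ ≤ ∑ ℓ, α ℓ * (k * (k * ‖x - xK‖)) := by
        refine Finset.sum_le_sum fun ℓ _ => ?_
        rw [norm_smul, hw ℓ, mul_one]
        exact hc ℓ
    _ = k ^ 2 * ‖x - xK‖ := by
        rw [← Finset.sum_mul, hsum, one_mul]; ring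
end

section
/- Let k > 0, x_K ∈ ℝ², h_K > 0, let d₁, …, d_n be unit vectors in ℝ², and let α₁, …, α_n be nonnegative real numbers with Σ_{ℓ=1}^n α_ℓ = 1 and Σ_{ℓ=1}^n α_ℓ d_ℓ = 0. Define b₁(x) = Σ_{ℓ=1}^n α_ℓ exp(i k d_ℓ·(x − x_K)). Then for every measurable set K ⊂ ℝ² of finite Lebesgue measure |K| contained in the closed ball of radius h_K centered at x_K, one has ‖∇b₁‖_{L²(K)} ≤ h_K k² |K|^{1/2}, where ‖∇b₁‖_{L²(K)}² = ∫_K |∇b₁(x)|² dx. -/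
open MeasureTheory

lemma exp_I_sub_one_norm_le (t : ℝ) :
    ‖Complex.exp (Complex.I * t) - 1‖ ≤ |t| := by
  have h1 : Complex.exp (Complex.I * t) = Complex.cos t + Complex.sin t * Complex.I := by
    rw [mul_comm, Complex.exp_mul_I]
  have hsq : ‖Complex.exp (Complex.I * t) - 1‖ ^ 2 ≤ |t| ^ 2 := by
    rw [h1]
    have h2 : (Complex.cos t + Complex.sin t * Complex.I - 1)
        = Complex.ofReal (Real.cos t - 1) + Complex.ofReal (Real.sin t) * Complex.I := by
      push_cast [Complex.ofReal_cos, Complex.ofReal_sin]; ring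
    rw [h2, Complex.sq_norm, Complex.normSq_add_mul_I, sq_abs]
    have hc := Real.one_sub_sq_div_two_le_cos (x := t)
    have hs := Real.sin_sq_add_cos_sq t
    nlinarith [Real.cos_le_one t]
  have h0 : (0:ℝ) ≤ ‖Complex.exp (Complex.I * t) - 1‖ := norm_nonneg _
  nlinarith [abs_nonneg t]

/-- `L²(K)` bound for the gradient of `b₁` on a set `K` contained in the closed
ball of radius `h_K` around `x_K`: `‖∇b₁‖_{L²(K)} ≤ h_K k² |K|^{1/2}`. -/
theorem planeWaveCombination_grad_L2_bound
    (k : ℝ) (hk : 0 < k) (xK : EuclideanSpace ℝ (Fin 2)) (hK : ℝ) (hhK : 0 < hK)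
    (n : ℕ) (d : Fin n → EuclideanSpace ℝ (Fin 2)) (hd : ∀ ℓ, ‖d ℓ‖ = 1)
    (α : Fin n → ℝ) (hα : ∀ ℓ, 0 ≤ α ℓ) (hsum : ∑ ℓ, α ℓ = 1)
    (hvec : ∑ ℓ, α ℓ • d ℓ = (0 : EuclideanSpace ℝ (Fin 2)))
    (g : EuclideanSpace ℝ (Fin 2) → EuclideanSpace ℂ (Fin 2))
    (hg : ∀ x j, g x j = ∑ ℓ, (α ℓ : ℂ) * Complex.I * (k : ℂ) * ((d ℓ j : ℝ) : ℂ) *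
      Complex.exp (Complex.I * (k : ℂ) * ((inner ℝ (d ℓ) (x - xK) : ℝ) : ℂ))) :
    ∀ K : Set (EuclideanSpace ℝ (Fin 2)), MeasurableSet K → volume K < ⊤ →
      K ⊆ Metric.closedBall xK hK →
      Real.sqrt (∫ x in K, ‖g x‖ ^ 2) ≤ hK * k ^ 2 * Real.sqrt ((volume K).toReal) := by
  intro K hKmeas hKfin hKsub
  have hzero : ∀ j, ∑ ℓ, α ℓ * d ℓ j = 0 := by
    intro j
    have h := congrArg (fun v => v j) hvec
    simp only [WithLp.ofLp_sum, Finset.sum_apply] at h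
    simpa [smul_eq_mul] using h
  -- pointwise bound
  have hpt : ∀ x ∈ K, ‖g x‖ ≤ hK * k ^ 2 := by
    intro x hx
    have hxball : ‖x - xK‖ ≤ hK := by
      have := hKsub hx
      simpa [Metric.mem_closedBall, dist_eq_norm] using this
    set c : Fin n → ℂ := fun ℓ => (α ℓ : ℂ) * Complex.I * (k : ℂ) *
      (Complex.exp (Complex.I * (k : ℂ) * ((inner ℝ (d ℓ) (x - xK) : ℝ) : ℂ)) - 1) with hc
    set v : Fin n → EuclideanSpace ℂ (Fin 2) := fun ℓ => WithLp.toLp 2 (fun j => c ℓ * ((d ℓ j : ℝ) : ℂ))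
      with hv
    have hgeq : g x = ∑ ℓ, v ℓ := by
      ext j
      rw [hg x j]
      have hsa : (∑ ℓ, v ℓ) j = ∑ ℓ, v ℓ j := by
          rw [WithLp.ofLp_sum, Finset.sum_apply]
      rw [hsa]
      have : ∀ ℓ, v ℓ j = (α ℓ : ℂ) * Complex.I * (k : ℂ) * ((d ℓ j : ℝ) : ℂ) *
          Complex.exp (Complex.I * (k : ℂ) * ((inner ℝ (d ℓ) (x - xK) : ℝ) : ℂ))
          - (α ℓ : ℂ) * Complex.I * (k : ℂ) * ((d ℓ j : ℝ) : ℂ) := by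
        intro ℓ; rw [hv, hc]; simp only [WithLp.ofLp_toLp]; ring
      rw [Finset.sum_congr rfl fun ℓ _ => this ℓ, Finset.sum_sub_distrib]
      have hz : ∑ ℓ, (α ℓ : ℂ) * Complex.I * (k : ℂ) * ((d ℓ j : ℝ) : ℂ) = 0 := by
        have : ∑ ℓ, (α ℓ : ℂ) * Complex.I * (k : ℂ) * ((d ℓ j : ℝ) : ℂ)
            = Complex.I * (k : ℂ) * ((∑ ℓ, α ℓ * d ℓ j : ℝ) : ℂ) := by
          push_cast [Finset.mul_sum]
          apply Finset.sum_congr rfl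
          intro ℓ _; ring
        rw [this, hzero j]
        simp
      rw [hz, sub_zero]
    have hnormv : ∀ ℓ, ‖v ℓ‖ = ‖c ℓ‖ := by
      intro ℓ
      rw [EuclideanSpace.norm_eq]
      have : ∀ j, ‖v ℓ j‖ ^ 2 = ‖c ℓ‖ ^ 2 * (d ℓ j) ^ 2 := by
        intro j
        rw [hv]
        simp [norm_mul, mul_pow, Complex.norm_real, sq_abs]
      rw [Finset.sum_congr rfl fun j _ => this j, ← Finset.mul_sum]
      have hd1 : ∑ j, (d ℓ j) ^ 2 = 1 := by
        have h2 : ‖d ℓ‖ ^ 2 = 1 := by rw [hd ℓ]; norm_num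
        rw [EuclideanSpace.norm_eq,
          Real.sq_sqrt (Finset.sum_nonneg fun j _ => sq_nonneg _)] at h2
        simpa [sq_abs] using h2
      rw [hd1, mul_one, Real.sqrt_sq (norm_nonneg _)]
    have hnormc : ∀ ℓ, ‖c ℓ‖ ≤ α ℓ * k * (k * hK) := by
      intro ℓ
      simp only [hc]
      have harg : Complex.I * (k : ℂ) * ((inner ℝ (d ℓ) (x - xK) : ℝ) : ℂ)
          = Complex.I * ((k * (inner ℝ (d ℓ) (x - xK) : ℝ) : ℝ) : ℂ) := by
        push_cast; ring
      rw [harg]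
      have hexp := exp_I_sub_one_norm_le (k * (inner ℝ (d ℓ) (x - xK) : ℝ))
      have hinner : |(inner ℝ (d ℓ) (x - xK) : ℝ)| ≤ hK := by
        calc |(inner ℝ (d ℓ) (x - xK) : ℝ)| ≤ ‖d ℓ‖ * ‖x - xK‖ := abs_real_inner_le_norm _ _
          _ ≤ 1 * hK := by rw [hd ℓ]; exact mul_le_mul_of_nonneg_left hxball zero_le_one
          _ = hK := one_mul hK
      have habs : |k * (inner ℝ (d ℓ) (x - xK) : ℝ)| ≤ k * hK := by
        rw [abs_mul, abs_of_pos hk]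
        exact mul_le_mul_of_nonneg_left hinner hk.le
      calc ‖(α ℓ : ℂ) * Complex.I * (k : ℂ) *
            (Complex.exp (Complex.I * ((k * (inner ℝ (d ℓ) (x - xK) : ℝ) : ℝ) : ℂ)) - 1)‖
          = α ℓ * k * ‖Complex.exp (Complex.I * ((k * (inner ℝ (d ℓ) (x - xK) : ℝ) : ℝ) : ℂ)) - 1‖ := by
            simp [norm_mul, Complex.norm_real, abs_of_nonneg (hα ℓ), abs_of_pos hk]
        _ ≤ α ℓ * k * (k * hK) := by
            apply mul_le_mul_of_nonneg_left (hexp.trans habs)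
            exact mul_nonneg (hα ℓ) hk.le
    calc ‖g x‖ = ‖∑ ℓ, v ℓ‖ := by rw [hgeq]
      _ ≤ ∑ ℓ, ‖v ℓ‖ := norm_sum_le _ _
      _ ≤ ∑ ℓ, α ℓ * k * (k * hK) := by
          apply Finset.sum_le_sum
          intro ℓ _; rw [hnormv ℓ]; exact hnormc ℓ
      _ = hK * k ^ 2 := by
          rw [← Finset.sum_mul, ← Finset.sum_mul, hsum]; ring
  -- integral bound
  set C := hK * k ^ 2 with hC
  have hC0 : 0 ≤ C := by positivity
  have hint : ∫ x in K, ‖g x‖ ^ 2 ≤ C ^ 2 * (volume K).toReal := by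
    have h1 : ∫ x in K, ‖g x‖ ^ 2 ≤ ∫ _x in K, C ^ 2 := by
      apply integral_mono_of_nonneg
      · exact Filter.Eventually.of_forall fun x => sq_nonneg _
      · exact integrableOn_const hKfin.ne
      · refine (ae_restrict_iff' hKmeas).2 (Filter.Eventually.of_forall fun x hx => ?_)
        exact pow_le_pow_left₀ (norm_nonneg _) (hpt x hx) 2
    rw [setIntegral_const, smul_eq_mul, mul_comm] at h1
    exact h1
  calc Real.sqrt (∫ x in K, ‖g x‖ ^ 2) ≤ Real.sqrt (C ^ 2 * (volume K).toReal) :=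
        Real.sqrt_le_sqrt hint
    _ = C * Real.sqrt ((volume K).toReal) := by
        rw [Real.sqrt_mul (sq_nonneg C), Real.sqrt_sq hC0]
end

section
/- Let v ∈ V*_p(K) and suppose w ∈ V*_p(K) satisfies ∫_K ∇w·conj(∇ξ) dV + k² ∫_K w·conj(ξ) dV = a^K(v, ξ) for all ξ ∈ V*_p(K). Then ‖∇(v − w)‖²_{L²(K)} = k² ‖v‖²_{L²(K)} − k² ‖w‖²_{L²(K)}; in particular ‖∇(v − w)‖_{L²(K)} ≤ k ‖v‖_{L²(K)}. -/
open MeasureTheory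

noncomputable section

/-- Points of the plane `ℝ²`. -/
abbrev Pt := EuclideanSpace ℝ (Fin 2)

/-- The plane wave `pw(x) = exp(i k d·(x − x_K))`. -/
def pw (k : ℝ) (xK d : Pt) : Pt → ℂ :=
  fun x => Complex.exp (Complex.I * (k : ℂ) * ((inner ℝ d (x - xK) : ℝ) : ℂ))

/-- The local plane wave space `V*_p(K)`: the complex span of the plane waves
with directions `d ℓ`, `ℓ = 1,…,p`, centered at `x_K`. -/
def Vstar (k : ℝ) (xK : Pt) {p : ℕ} (d : Fin p → Pt) : Submodule ℂ (Pt → ℂ) :=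
  Submodule.span ℂ (Set.range fun ℓ => pw k xK (d ℓ))

/-- The gradient (componentwise Fréchet derivative) of a complex-valued
function on `ℝ²`. -/
def grad2 (u : Pt → ℂ) (x : Pt) : Fin 2 → ℂ :=
  fun j => fderiv ℝ u x (EuclideanSpace.single j 1)

/-- The local Helmholtz bilinear form
`a^K(u,v) = ∫_K ∇u·conj(∇v) dV − k² ∫_K u conj(v) dV`. -/
def aK (K : Set Pt) (k : ℝ) (u v : Pt → ℂ) : ℂ :=
  (∫ x in K, ∑ j : Fin 2, grad2 u x j * (starRingEnd ℂ) (grad2 v x j)) -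
    (k ^ 2 : ℂ) * ∫ x in K, u x * (starRingEnd ℂ) (v x)

/-- `‖∇u‖²_{L²(K)}`. -/
def gradSq (K : Set Pt) (u : Pt → ℂ) : ℝ :=
  ∫ x in K, ∑ j : Fin 2, ‖grad2 u x j‖ ^ 2

/-- `‖u‖²_{L²(K)}`. -/
def l2Sq (K : Set Pt) (u : Pt → ℂ) : ℝ :=
  ∫ x in K, ‖u x‖ ^ 2

/-- The weighted norm `‖u‖_{1,k,K} = (‖∇u‖²_{L²(K)} + k²‖u‖²_{L²(K)})^{1/2}`. -/
def norm1k (K : Set Pt) (k : ℝ) (u : Pt → ℂ) : ℝ :=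
  Real.sqrt (gradSq K u + k ^ 2 * l2Sq K u)

end

noncomputable section

def Ld (d : Pt) : Pt →L[ℝ] ℂ := Complex.ofRealCLM.comp (innerSL ℝ d)

lemma hasFDerivAt_pw (k : ℝ) (xK d x : Pt) :
    HasFDerivAt (pw k xK d) ((Complex.I * k * pw k xK d x) • Ld d) x := by
  have h0 : HasFDerivAt (fun y : Pt => (inner ℝ d (y - xK) : ℝ)) (innerSL ℝ d) x := by
    have hsub : HasFDerivAt (fun y : Pt => y - xK) (ContinuousLinearMap.id ℝ Pt) x :=
      (hasFDerivAt_id x).sub_const xK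
    exact ((innerSL ℝ d).hasFDerivAt.comp x hsub)
  have h1 : HasFDerivAt (fun y : Pt => ((inner ℝ d (y - xK) : ℝ) : ℂ)) (Ld d) x :=
    Complex.ofRealCLM.hasFDerivAt.comp x h0
  have h3 := (h1.const_mul (Complex.I * (k:ℂ))).cexp
  have he : (Complex.exp (Complex.I * (k:ℂ) * ((inner ℝ d (x - xK) : ℝ):ℂ))) • ((Complex.I * (k:ℂ)) • Ld d)
      = (Complex.I * k * pw k xK d x) • Ld d := by
    rw [smul_smul, pw]; ring_nf
  rw [← he]
  exact h3

lemma grad2_pw (k : ℝ) (xK d x : Pt) (j : Fin 2) :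
    grad2 (pw k xK d) x j = Complex.I * k * ((d j : ℝ) : ℂ) * pw k xK d x := by
  rw [grad2, (hasFDerivAt_pw k xK d x).fderiv]
  simp [Ld]
  fin_cases j <;> simp [EuclideanSpace.inner_single_right] <;> ring

lemma norm_pw (k : ℝ) (xK d x : Pt) : ‖pw k xK d x‖ = 1 := by
  have : Complex.I * (k:ℂ) * ((inner ℝ d (x - xK) : ℝ):ℂ)
      = ((k * (inner ℝ d (x - xK) : ℝ) : ℝ) : ℂ) * Complex.I := by push_cast; ring
  rw [pw, this]
  simp [Complex.norm_exp]

lemma continuous_pw (k : ℝ) (xK d : Pt) : Continuous (pw k xK d) := by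
  have h : Continuous fun x : Pt => (inner ℝ d (x - xK) : ℝ) :=
    continuous_const.inner (continuous_id.sub continuous_const)
  exact Complex.continuous_exp.comp (continuous_const.mul (Complex.continuous_ofReal.comp h))

def PW (k : ℝ) (xK : Pt) {p : ℕ} (d : Fin p → Pt) (c : Fin p → ℂ) : Pt → ℂ :=
  fun x => ∑ ℓ, c ℓ * pw k xK (d ℓ) x

lemma mem_Vstar_iff {k : ℝ} {xK : Pt} {p : ℕ} {d : Fin p → Pt} {u : Pt → ℂ} :
    u ∈ Vstar k xK d ↔ ∃ c, u = PW k xK d c := by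
  rw [Vstar, Submodule.mem_span_range_iff_exists_fun]
  constructor
  · rintro ⟨c, rfl⟩; exact ⟨c, by funext x; simp [PW]⟩
  · rintro ⟨c, rfl⟩; exact ⟨c, by funext x; simp [PW]⟩

lemma hasFDerivAt_PW (k : ℝ) (xK : Pt) {p : ℕ} (d : Fin p → Pt) (c : Fin p → ℂ) (x : Pt) :
    HasFDerivAt (PW k xK d c)
      (∑ ℓ, (c ℓ * (Complex.I * k * pw k xK (d ℓ) x)) • Ld (d ℓ)) x := by
  have h := HasFDerivAt.fun_sum (fun ℓ (_ : ℓ ∈ Finset.univ) =>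
    (hasFDerivAt_pw k xK (d ℓ) x).const_mul (c ℓ))
  simp only [smul_smul] at h
  exact h

lemma grad2_PW (k : ℝ) (xK : Pt) {p : ℕ} (d : Fin p → Pt) (c : Fin p → ℂ) (x : Pt) (j : Fin 2) :
    grad2 (PW k xK d c) x j = ∑ ℓ, c ℓ * (Complex.I * k * ((d ℓ j : ℝ) : ℂ)) * pw k xK (d ℓ) x := by
  rw [grad2, (hasFDerivAt_PW k xK d c x).fderiv]
  rw [ContinuousLinearMap.sum_apply]
  refine Finset.sum_congr rfl fun ℓ _ => ?_
  rw [ContinuousLinearMap.smul_apply]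
  simp [Ld]
  fin_cases j <;> simp [EuclideanSpace.inner_single_right] <;> ring

lemma continuous_PW (k : ℝ) (xK : Pt) {p : ℕ} (d : Fin p → Pt) (c : Fin p → ℂ) :
    Continuous (PW k xK d c) :=
  continuous_finset_sum _ fun ℓ _ => continuous_const.mul (continuous_pw k xK (d ℓ))

lemma continuous_grad2_PW (k : ℝ) (xK : Pt) {p : ℕ} (d : Fin p → Pt) (c : Fin p → ℂ) (j : Fin 2) :
    Continuous (fun x => grad2 (PW k xK d c) x j) := by
  have : (fun x => grad2 (PW k xK d c) x j)
      = fun x => ∑ ℓ, c ℓ * (Complex.I * k * ((d ℓ j : ℝ) : ℂ)) * pw k xK (d ℓ) x := by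
    funext x; exact grad2_PW k xK d c x j
  rw [this]
  exact continuous_finset_sum _ fun ℓ _ => continuous_const.mul (continuous_pw k xK (d ℓ))

lemma norm_PW_le (k : ℝ) (xK : Pt) {p : ℕ} (d : Fin p → Pt) (c : Fin p → ℂ) (x : Pt) :
    ‖PW k xK d c x‖ ≤ ∑ ℓ, ‖c ℓ‖ := by
  refine (norm_sum_le _ _).trans (le_of_eq (Finset.sum_congr rfl fun ℓ _ => ?_))
  rw [norm_mul, norm_pw, mul_one]

lemma coord_le_norm (y : Pt) (j : Fin 2) : ‖y j‖ ≤ ‖y‖ := by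
  rw [EuclideanSpace.norm_eq]
  have h : ‖y j‖^2 ≤ ∑ i, ‖y i‖^2 :=
    Finset.single_le_sum (f := fun i => ‖y i‖^2) (fun i _ => sq_nonneg _) (Finset.mem_univ j)
  calc ‖y j‖ = Real.sqrt (‖y j‖^2) := (Real.sqrt_sq (norm_nonneg _)).symm
    _ ≤ _ := Real.sqrt_le_sqrt h

lemma norm_grad2_PW_le (k : ℝ) (xK : Pt) {p : ℕ} (d : Fin p → Pt) (c : Fin p → ℂ) (x : Pt) (j : Fin 2) :
    ‖grad2 (PW k xK d c) x j‖ ≤ ∑ ℓ, ‖c ℓ‖ * (|k| * ‖d ℓ‖) := by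
  rw [grad2_PW]
  refine (norm_sum_le _ _).trans (Finset.sum_le_sum fun ℓ _ => ?_)
  have h1 : ‖c ℓ * (Complex.I * (k:ℂ) * ((d ℓ j : ℝ) : ℂ)) * pw k xK (d ℓ) x‖
      = ‖c ℓ‖ * (|k| * |d ℓ j|) := by
    rw [norm_mul, norm_mul, norm_pw, mul_one, norm_mul, norm_mul]
    simp
  rw [h1]
  have h2 : |d ℓ j| ≤ ‖d ℓ‖ := by simpa [Real.norm_eq_abs] using coord_le_norm (d ℓ) j
  gcongr

def Gint (K : Set Pt) (k : ℝ) (xK : Pt) {p : ℕ} (d : Fin p → Pt) (a b : Fin p → ℂ) : ℂ :=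
  ∫ x in K, ∑ j : Fin 2, grad2 (PW k xK d a) x j * (starRingEnd ℂ) (grad2 (PW k xK d b) x j)

def Mint (K : Set Pt) (k : ℝ) (xK : Pt) {p : ℕ} (d : Fin p → Pt) (a b : Fin p → ℂ) : ℂ :=
  ∫ x in K, PW k xK d a x * (starRingEnd ℂ) (PW k xK d b x)

section Integrals

variable {K : Set Pt} (k : ℝ) (xK : Pt) {p : ℕ} (d : Fin p → Pt)

lemma integrableOn_cb (hKfin : volume K < ⊤) {f : Pt → ℂ} (hc : Continuous f) {C : ℝ} (hC : ∀ x, ‖f x‖ ≤ C) :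
    IntegrableOn f K volume :=
  Measure.integrableOn_of_bounded hKfin.ne hc.aestronglyMeasurable
    (Filter.Eventually.of_forall hC)

lemma Mint_integrable (hKfin : volume K < ⊤) (a b : Fin p → ℂ) :
    IntegrableOn (fun x => PW k xK d a x * (starRingEnd ℂ) (PW k xK d b x)) K volume := by
  refine integrableOn_cb hKfin ((continuous_PW k xK d a).mul (Complex.continuous_conj.comp (continuous_PW k xK d b))) (C := (∑ ℓ, ‖a ℓ‖) * (∑ ℓ, ‖b ℓ‖)) fun x => ?_
  rw [norm_mul]
  have := norm_PW_le k xK d a x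
  have := norm_PW_le k xK d b x
  calc ‖PW k xK d a x‖ * ‖(starRingEnd ℂ) (PW k xK d b x)‖
      = ‖PW k xK d a x‖ * ‖PW k xK d b x‖ := by rw [RCLike.norm_conj]
    _ ≤ _ := mul_le_mul (norm_PW_le k xK d a x) (norm_PW_le k xK d b x) (norm_nonneg _)
        (Finset.sum_nonneg fun _ _ => norm_nonneg _)

lemma Gint_integrable (hKfin : volume K < ⊤) (a b : Fin p → ℂ) :
    IntegrableOn (fun x => ∑ j : Fin 2, grad2 (PW k xK d a) x j *
      (starRingEnd ℂ) (grad2 (PW k xK d b) x j)) K volume := by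
  set Ca := ∑ ℓ, ‖a ℓ‖ * (|k| * ‖d ℓ‖) with hCa
  set Cb := ∑ ℓ, ‖b ℓ‖ * (|k| * ‖d ℓ‖) with hCb
  have hCa0 : 0 ≤ Ca := Finset.sum_nonneg fun ℓ _ => by positivity
  have hcont : Continuous (fun x => ∑ j : Fin 2, grad2 (PW k xK d a) x j *
      (starRingEnd ℂ) (grad2 (PW k xK d b) x j)) :=
    continuous_finset_sum _ fun j _ =>
      (continuous_grad2_PW k xK d a j).mul
        (Complex.continuous_conj.comp (continuous_grad2_PW k xK d b j))
  refine integrableOn_cb hKfin hcont (C := 2 * (Ca * Cb)) fun x => ?_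
  calc ‖∑ j : Fin 2, grad2 (PW k xK d a) x j * (starRingEnd ℂ) (grad2 (PW k xK d b) x j)‖
      ≤ ∑ j : Fin 2, ‖grad2 (PW k xK d a) x j * (starRingEnd ℂ) (grad2 (PW k xK d b) x j)‖ :=
        norm_sum_le _ _
    _ ≤ ∑ _j : Fin 2, Ca * Cb := by
        refine Finset.sum_le_sum fun j _ => ?_
        rw [norm_mul, RCLike.norm_conj]
        exact mul_le_mul (norm_grad2_PW_le k xK d a x j) (norm_grad2_PW_le k xK d b x j)
          (norm_nonneg _) hCa0
    _ = 2 * (Ca * Cb) := by simp [Finset.sum_const]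

end Integrals

section Identities

variable {K : Set Pt} (k : ℝ) (xK : Pt) {p : ℕ} (d : Fin p → Pt)

lemma Mint_symm (a b : Fin p → ℂ) :
    Mint K k xK d a b = (starRingEnd ℂ) (Mint K k xK d b a) := by
  rw [Mint, Mint, ← integral_conj]
  refine integral_congr_ae (Filter.Eventually.of_forall fun x => ?_)
  simp only [map_mul, Complex.conj_conj]
  exact mul_comm _ _

lemma Mint_self (a : Fin p → ℂ) :
    Mint K k xK d a a = ((l2Sq K (PW k xK d a) : ℝ) : ℂ) := by
  rw [Mint, l2Sq]
  refine Eq.trans ?_ integral_ofReal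
  refine integral_congr_ae (Filter.Eventually.of_forall fun x => ?_)
  show PW k xK d a x * (starRingEnd ℂ) (PW k xK d a x) = _
  rw [Complex.mul_conj, Complex.normSq_eq_norm_sq]
  norm_cast

lemma Gint_self (a : Fin p → ℂ) :
    Gint K k xK d a a = ((gradSq K (PW k xK d a) : ℝ) : ℂ) := by
  rw [Gint, gradSq]
  refine Eq.trans ?_ integral_ofReal
  refine integral_congr_ae (Filter.Eventually.of_forall fun x => ?_)
  show (∑ j : Fin 2, grad2 (PW k xK d a) x j * (starRingEnd ℂ) (grad2 (PW k xK d a) x j)) = _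
  push_cast
  refine Finset.sum_congr rfl fun j _ => ?_
  rw [Complex.mul_conj, Complex.normSq_eq_norm_sq]
  norm_cast

lemma grad2_PW_sub (a b : Fin p → ℂ) (x : Pt) (j : Fin 2) :
    grad2 (PW k xK d (a - b)) x j = grad2 (PW k xK d a) x j - grad2 (PW k xK d b) x j := by
  simp [grad2_PW, sub_mul, Finset.sum_sub_distrib]

lemma PW_sub (a b : Fin p → ℂ) :
    PW k xK d (a - b) = fun x => PW k xK d a x - PW k xK d b x := by
  funext x; simp [PW, sub_mul, Finset.sum_sub_distrib]

lemma Gint_expand (hKfin : volume K < ⊤) (a b : Fin p → ℂ) :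
    Gint K k xK d (a - b) (a - b) =
      Gint K k xK d a a - Gint K k xK d a b - Gint K k xK d b a + Gint K k xK d b b := by
  have hpt : (fun x => ∑ j : Fin 2, grad2 (PW k xK d (a-b)) x j *
        (starRingEnd ℂ) (grad2 (PW k xK d (a-b)) x j)) =
      fun x => (((∑ j : Fin 2, grad2 (PW k xK d a) x j * (starRingEnd ℂ) (grad2 (PW k xK d a) x j))
        - (∑ j : Fin 2, grad2 (PW k xK d a) x j * (starRingEnd ℂ) (grad2 (PW k xK d b) x j)))
        - (∑ j : Fin 2, grad2 (PW k xK d b) x j * (starRingEnd ℂ) (grad2 (PW k xK d a) x j)))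
        + (∑ j : Fin 2, grad2 (PW k xK d b) x j * (starRingEnd ℂ) (grad2 (PW k xK d b) x j)) := by
    funext x
    simp only [grad2_PW_sub, ← Finset.sum_sub_distrib, ← Finset.sum_add_distrib]
    refine Finset.sum_congr rfl fun j _ => ?_
    rw [map_sub]
    ring
  have iaa := Gint_integrable k xK d hKfin a a
  have iab := Gint_integrable k xK d hKfin a b
  have iba := Gint_integrable k xK d hKfin b a
  have ibb := Gint_integrable k xK d hKfin b b
  have h2 : IntegrableOn (fun x => (∑ j : Fin 2, grad2 (PW k xK d a) x j * (starRingEnd ℂ) (grad2 (PW k xK d a) x j))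
      - (∑ j : Fin 2, grad2 (PW k xK d a) x j * (starRingEnd ℂ) (grad2 (PW k xK d b) x j))) K volume := iaa.sub iab
  have h1 : IntegrableOn (fun x => ((∑ j : Fin 2, grad2 (PW k xK d a) x j * (starRingEnd ℂ) (grad2 (PW k xK d a) x j))
      - (∑ j : Fin 2, grad2 (PW k xK d a) x j * (starRingEnd ℂ) (grad2 (PW k xK d b) x j)))
      - (∑ j : Fin 2, grad2 (PW k xK d b) x j * (starRingEnd ℂ) (grad2 (PW k xK d a) x j))) K volume := h2.sub iba
  rw [Gint, hpt, integral_add h1 ibb, integral_sub h2 iba, integral_sub iaa iab]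
  rfl

end Identities

end

/-- If `w ∈ V*_p(K)` solves the auxiliary coercive problem
`(∇w, ∇ξ)_K + k²(w, ξ)_K = a^K(v, ξ)` for all `ξ ∈ V*_p(K)`, then
`‖∇(v − w)‖²_{L²(K)} = k²‖v‖²_{L²(K)} − k²‖w‖²_{L²(K)}`, and in particular
`‖∇(v − w)‖_{L²(K)} ≤ k ‖v‖_{L²(K)}`. -/

theorem auxiliary_problem_energy_identity
    (K : Set Pt) (hKopen : IsOpen K) (hKpos : 0 < volume K) (hKfin : volume K < ⊤)
    (k : ℝ) (hk : 0 < k) (xK : Pt)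
    (p : ℕ) (d : Fin p → Pt) (hd : ∀ ℓ, ‖d ℓ‖ = 1)
    (v w : Pt → ℂ) (hv : v ∈ Vstar k xK d) (hw : w ∈ Vstar k xK d)
    (hproj : ∀ ξ ∈ Vstar k xK d,
      (∫ x in K, ∑ j : Fin 2, grad2 w x j * (starRingEnd ℂ) (grad2 ξ x j)) +
        (k ^ 2 : ℂ) * ∫ x in K, w x * (starRingEnd ℂ) (ξ x) = aK K k v ξ) :
    gradSq K (fun x => v x - w x) = k ^ 2 * l2Sq K v - k ^ 2 * l2Sq K w ∧
      Real.sqrt (gradSq K (fun x => v x - w x)) ≤ k * Real.sqrt (l2Sq K v) := by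
  obtain ⟨cv, rfl⟩ := mem_Vstar_iff.mp hv
  obtain ⟨cw, rfl⟩ := mem_Vstar_iff.mp hw
  have h1 : Gint K k xK d cw cv + (k ^ 2 : ℂ) * Mint K k xK d cw cv
      = Gint K k xK d cv cv - (k ^ 2 : ℂ) * Mint K k xK d cv cv := hproj _ hv
  have h2 : Gint K k xK d cw cw + (k ^ 2 : ℂ) * Mint K k xK d cw cw
      = Gint K k xK d cv cw - (k ^ 2 : ℂ) * Mint K k xK d cv cw := hproj _ hw
  have he : (fun x => PW k xK d cv x - PW k xK d cw x) = PW k xK d (cv - cw) :=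
    (PW_sub k xK d cv cw).symm
  have e3 := Mint_self (K := K) k xK d cv
  have e4 := Mint_self (K := K) k xK d cw
  have e5 := Mint_symm (K := K) k xK d cv cw
  have hgs : ((gradSq K (PW k xK d (cv - cw)) : ℝ) : ℂ)
      = ((k ^ 2 * l2Sq K (PW k xK d cv) : ℝ) : ℂ) - ((k ^ 2 * l2Sq K (PW k xK d cw) : ℝ) : ℂ)
        + ((k : ℂ)) ^ 2 * (Mint K k xK d cw cv - (starRingEnd ℂ) (Mint K k xK d cw cv)) := by
    rw [← Gint_self, Gint_expand k xK d hKfin cv cw]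
    push_cast at h1 h2 e3 e4 e5 ⊢
    linear_combination h2 - h1 + ((k : ℂ)) ^ 2 * e3 - ((k : ℂ)) ^ 2 * e4 - ((k : ℂ)) ^ 2 * e5
  have hre := congrArg Complex.re hgs
  simp only [Complex.ofReal_re, Complex.add_re, Complex.sub_re, Complex.mul_re,
    Complex.conj_re, Complex.conj_im, Complex.ofReal_im, sub_self, mul_zero,
    Complex.ofReal_pow] at hre
  have hmain : gradSq K (PW k xK d (cv - cw))
      = k ^ 2 * l2Sq K (PW k xK d cv) - k ^ 2 * l2Sq K (PW k xK d cw) := by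
    rw [hre]
    simp [pow_two, Complex.mul_im]
  rw [he]
  refine ⟨hmain, ?_⟩
  have hw0 : 0 ≤ l2Sq K (PW k xK d cw) :=
    integral_nonneg fun x => pow_two_nonneg _
  have hv0 : 0 ≤ l2Sq K (PW k xK d cv) :=
    integral_nonneg fun x => pow_two_nonneg _
  have hle : gradSq K (PW k xK d (cv - cw)) ≤ k ^ 2 * l2Sq K (PW k xK d cv) := by
    rw [hmain]
    nlinarith [mul_nonneg (sq_nonneg k) hw0]
  calc Real.sqrt (gradSq K (PW k xK d (cv - cw)))
      ≤ Real.sqrt (k ^ 2 * l2Sq K (PW k xK d cv)) := Real.sqrt_le_sqrt hle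
    _ = k * Real.sqrt (l2Sq K (PW k xK d cv)) := by
        rw [Real.sqrt_mul (sq_nonneg k), Real.sqrt_sq hk.le]
end
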